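/- Evaluating the multivariate Stirling polynomial of the first kind at all variables equal to 1 gives the signed Stirling numbers of the first kind: S_{n,k}(1,…,1) = s₁(n,k) = (−1)^{n−k}·c(n,k), where c(n,k) is the number of permutations of n elements with exactly k cycles, for all 1 ≤ k ≤ n. -/

import Mathlib

open Finset MvPolynomial

/-- The set of (n,k)-partition types: tuples (r₁,…,rₙ) (rⱼ = r (j-1)) with Σ rᵢ = k, Σ i·rᵢ = n. -/
def ptypes (n k : ℕ) : Finset (Fin n → ℕ) :=
  (Fintype.piFinset fun _ : Fin n => Finset.range (n + 1)).filter
    fun r => (∑ i, r i) = k ∧ (∑ i, (i.1 + 1) * r i) = n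

/-- Denominator of the Faà di Bruno coefficient: ∏ rᵢ!·(i!)^{rᵢ}. -/
def bruDenom {n : ℕ} (r : Fin n → ℕ) : ℕ :=
  ∏ i, (r i).factorial * ((i.1 + 1).factorial) ^ (r i)

/-- Partial exponential Bell polynomial (variable `X j` stands for X_{j+1}). -/
noncomputable def Bell (n k : ℕ) : MvPolynomial ℕ ℤ :=
  ∑ r ∈ ptypes n k,
    C ((n.factorial / bruDenom r : ℕ) : ℤ) * ∏ i, (X i.1 : MvPolynomial ℕ ℤ) ^ (r i)

/-- Associated Bell polynomial: Bell with X₁ (= `X 0`) set to 0. -/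
noncomputable def BellT (n k : ℕ) : MvPolynomial ℕ ℤ :=
  aeval (fun j => if j = 0 then 0 else (X j : MvPolynomial ℕ ℤ)) (Bell n k)

/-- Signed Stirling numbers of the first kind. -/
def s1 : ℕ → ℕ → ℤ
  | 0, 0 => 1
  | 0, _ + 1 => 0
  | _ + 1, 0 => 0
  | n + 1, k + 1 => s1 n k - n * s1 n (k + 1)

/-- Stirling numbers of the second kind. -/
def s2 : ℕ → ℕ → ℤ
  | 0, 0 => 1
  | 0, _ + 1 => 0
  | _ + 1, 0 => 0
  | n + 1, k + 1 => s2 n k + (k + 1) * s2 n (k + 1)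

/-- Unsigned Stirling numbers of the first kind (cycle numbers). -/
def cyc : ℕ → ℕ → ℕ
  | 0, 0 => 1
  | 0, _ + 1 => 0
  | _ + 1, 0 => 0
  | n + 1, k + 1 => cyc n k + n * cyc n (k + 1)

/-- First entry r₁ of a partition type (0 if the tuple is empty). -/
def firstEntry {m : ℕ} (r : Fin m → ℕ) : ℕ :=
  ∑ i ∈ Finset.univ.filter (fun i : Fin m => i.1 = 0), r i

/-- Multivariate Stirling polynomials of the first kind, via the differential recurrence. -/
noncomputable def Spoly : ℕ → ℕ → MvPolynomial ℕ ℤ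
  | 0, _ => 0
  | 1, k => if k = 1 then 1 else 0
  | n + 2, k =>
    if k = 0 then 0 else
      C (-(2 * (n : ℤ) + 1)) * X 1 * Spoly (n + 1) k
        + X 0 * (Spoly (n + 1) (k - 1)
          + ∑ j ∈ Finset.Icc 1 ((n + 1) - k + 1),
              X j * pderiv (j - 1) (Spoly (n + 1) k))


lemma X_mul_pderiv_monomial (i : ℕ) (m : ℕ →₀ ℕ) (c : ℤ) :
    X i * pderiv i (monomial m c) = (m i) • monomial m c := by
  rw [pderiv_monomial]
  rcases Nat.eq_zero_or_pos (m i) with h | h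
  · simp [h]
  · rw [X, monomial_mul, smul_monomial]
    congr 1
    · rw [add_comm, tsub_add_cancel_of_le]
      rwa [Finsupp.single_le_iff]
    · push_cast; ring

lemma pderiv_supported {s : Set ℕ} {p : MvPolynomial ℕ ℤ} (hp : p ∈ supported ℤ s) (i : ℕ) :
    pderiv i p ∈ supported ℤ s := by
  rw [supported_eq_adjoin_X] at hp ⊢
  induction hp using Algebra.adjoin_induction with
  | mem x hx =>
    obtain ⟨j, hj, rfl⟩ := hx
    rcases eq_or_ne j i with rfl | h
    · simp [Subalgebra.one_mem]
    · simp [pderiv_X_of_ne h, Subalgebra.zero_mem]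
  | algebraMap r => simpa using Subalgebra.zero_mem _
  | add x y _ _ hx hy => simpa using Subalgebra.add_mem _ hx hy
  | mul x y hx hy hx' hy' =>
    rw [pderiv_mul]
    exact Subalgebra.add_mem _ (Subalgebra.mul_mem _ hx' hy) (Subalgebra.mul_mem _ hx hy')

lemma isHomogeneous_pderiv {p : MvPolynomial ℕ ℤ} {d : ℕ} (hp : p.IsHomogeneous d) (i : ℕ) :
    (pderiv i p).IsHomogeneous (d - 1) := by
  rw [p.as_sum, map_sum]
  apply IsHomogeneous.sum
  intro m hm
  rw [pderiv_monomial]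
  rcases Nat.eq_zero_or_pos (m i) with h | h
  · simp only [h, Nat.cast_zero, mul_zero, map_zero]
    exact isHomogeneous_zero _ _ _
  · apply isHomogeneous_monomial
    have hdeg : m.degree = d := by
      have := hp (mem_support_iff.mp hm)
      rwa [Pi.one_def, ← Finsupp.degree_eq_weight_one] at this
    have h1 : (m - Finsupp.single i 1) + Finsupp.single i 1 = m := by
      rw [tsub_add_cancel_of_le]; rwa [Finsupp.single_le_iff]
    have hadd : ∀ a b : ℕ →₀ ℕ, (a + b).degree = a.degree + b.degree := by
      intro a b; simp [Finsupp.degree_eq_weight_one, map_add]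
    have : (m - Finsupp.single i 1).degree + (Finsupp.single i 1).degree = d := by
      rw [← hadd, h1, hdeg]
    have hs : (Finsupp.single i (1:ℕ)).degree = 1 := by
      exact Finsupp.degree_single i 1
    omega

lemma euler {p : MvPolynomial ℕ ℤ} {d : ℕ} (hp : p.IsHomogeneous d) {T : Finset ℕ}
    (hT : p.vars ⊆ T) : ∑ i ∈ T, X i * pderiv i p = d • p := by
  have key : ∀ i, X i * pderiv i p
      = ∑ m ∈ p.support, (m i) • monomial m (coeff m p) := by
    intro i
    conv_lhs => rw [p.as_sum, map_sum, Finset.mul_sum]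
    exact Finset.sum_congr rfl fun m _ => X_mul_pderiv_monomial i m _
  simp only [key]
  rw [Finset.sum_comm]
  conv_rhs => rw [p.as_sum, Finset.smul_sum]
  refine Finset.sum_congr rfl fun m hm => ?_
  rw [← Finset.sum_smul]
  congr 1
  have hsub : m.support ⊆ T := fun i hi =>
    hT (mem_vars i |>.mpr ⟨m, hm, hi⟩)
  rw [← Finset.sum_subset hsub (fun x _ hx => Finsupp.notMem_support_iff.mp hx)]
  have := hp (mem_support_iff.mp hm)
  rwa [Pi.one_def, ← Finsupp.degree_eq_weight_one] at this

lemma spoly_zero : ∀ n : ℕ, 1 ≤ n → Spoly n 0 = 0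
  | 1, _ => by simp [Spoly]
  | (n+2), _ => by simp [Spoly]

lemma spoly_gt : ∀ n k : ℕ, n < k → Spoly n k = 0
  | 0, k, _ => by simp [Spoly]
  | 1, k, h => by
      have : k ≠ 1 := by omega
      simp [Spoly, this]
  | (n+2), k, h => by
      have h1 := spoly_gt (n+1) k (by omega)
      have h2 := spoly_gt (n+1) (k-1) (by omega)
      have : k ≠ 0 := by omega
      simp [Spoly, this, h1, h2]

lemma spoly_supported : ∀ n k : ℕ, Spoly n k ∈ supported ℤ {i : ℕ | i + k ≤ n}
  | 0, k => by simp [Spoly, Subalgebra.zero_mem]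
  | 1, k => by
      rcases eq_or_ne k 1 with rfl | h
      · simp only [Spoly, if_pos rfl]
        exact Subalgebra.one_mem _
      · simp [Spoly, h, Subalgebra.zero_mem]
  | (n+2), k => by
      rcases Nat.eq_zero_or_pos k with rfl | hk
      · simp [Spoly, Subalgebra.zero_mem]
      rcases lt_or_ge (n+2) k with h | h
      · rw [spoly_gt _ _ h]; exact Subalgebra.zero_mem _
      have hmono : ∀ m : ℕ, m + 1 = n + 2 →
          supported ℤ {i : ℕ | i + k ≤ m} ≤ supported ℤ {i : ℕ | i + k ≤ n + 2} := by
        intro m _; apply supported_mono; intro i hi; simp only [Set.mem_setOf_eq] at hi ⊢; omega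
      have hS : Spoly (n+1) k ∈ supported ℤ {i : ℕ | i + k ≤ n + 2} :=
        supported_mono (fun i hi => by simp only [Set.mem_setOf_eq] at hi ⊢; omega)
          (spoly_supported (n+1) k)
      have hS' : Spoly (n+1) (k-1) ∈ supported ℤ {i : ℕ | i + k ≤ n + 2} :=
        supported_mono (fun i hi => by simp only [Set.mem_setOf_eq] at hi ⊢; omega)
          (spoly_supported (n+1) (k-1))
      have hne : k ≠ 0 := by omega
      rw [Spoly, if_neg hne]
      refine Subalgebra.add_mem _ ?_ (Subalgebra.mul_mem _ ?_ (Subalgebra.add_mem _ hS' ?_))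
      · -- C * X 1 * Spoly (n+1) k
        rcases lt_or_ge (n+1) k with h1 | h1
        · rw [spoly_gt _ _ h1, mul_zero]; exact Subalgebra.zero_mem _
        · refine Subalgebra.mul_mem _ (Subalgebra.mul_mem _ ?_ ?_) hS
          · rw [show (C (-(2 * (n : ℤ) + 1)) : MvPolynomial ℕ ℤ)
              = algebraMap ℤ _ (-(2 * (n : ℤ) + 1)) from rfl]
            exact Subalgebra.algebraMap_mem _ _
          · rw [X_mem_supported]; simp only [Set.mem_setOf_eq]; omega
      · -- X 0
        rw [X_mem_supported]; simp only [Set.mem_setOf_eq]; omega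
      · -- the sum
        apply Subalgebra.sum_mem
        intro j hj
        rcases lt_or_ge (n+1) k with h1 | h1
        · rw [spoly_gt _ _ h1]
          simp only [map_zero, mul_zero]
          exact Subalgebra.zero_mem _
        · simp only [Finset.mem_Icc] at hj
          refine Subalgebra.mul_mem _ ?_
            (hmono (n+1) rfl (pderiv_supported (spoly_supported (n+1) k) _))
          rw [X_mem_supported]; simp only [Set.mem_setOf_eq]; omega


lemma spoly_homog : ∀ n k : ℕ, (Spoly (n+1) k).IsHomogeneous n
  | 0, k => by
      rcases eq_or_ne k 1 with rfl | h
      · simp only [Spoly, if_pos rfl]; exact isHomogeneous_one _ _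
      · simp only [Spoly, if_neg h]; exact isHomogeneous_zero _ _ _
  | (n+1), k => by
      rcases Nat.eq_zero_or_pos k with rfl | hk
      · simp only [Spoly, if_pos rfl]; exact isHomogeneous_zero _ _ _
      have hne : k ≠ 0 := by omega
      rw [show n + 1 + 1 = n + 2 from rfl, Spoly, if_neg hne]
      have hS := spoly_homog n k
      have hS' := spoly_homog n (k-1)
      have hsum : ∀ j : ℕ, (X j * pderiv (j-1) (Spoly (n+1) k) : MvPolynomial ℕ ℤ).IsHomogeneous n := by
        intro j
        rcases Nat.eq_zero_or_pos n with rfl | hn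
        · have h0 : pderiv (j-1) (Spoly 1 k) = 0 := by
            rcases eq_or_ne k 1 with rfl | h
            · simp only [Spoly, if_pos rfl]; exact pderiv_one
            · simp only [Spoly, if_neg h]; exact map_zero _
          rw [h0, mul_zero]; exact isHomogeneous_zero _ _ _
        · have := (isHomogeneous_X ℤ j).mul (isHomogeneous_pderiv hS (j-1))
          rwa [show 1 + (n - 1) = n by omega] at this
      apply IsHomogeneous.add
      · have h1 : ((C (-(2 * (n : ℤ) + 1)) * X 1 : MvPolynomial ℕ ℤ)).IsHomogeneous 1 := by
          have := (isHomogeneous_C ℕ (-(2 * (n : ℤ) + 1))).mul (isHomogeneous_X ℤ 1)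
          rwa [zero_add] at this
        have := h1.mul hS
        rwa [Nat.add_comm 1 n] at this
      · have hsum' : (∑ j ∈ Finset.Icc 1 ((n + 1) - k + 1),
            X j * pderiv (j - 1) (Spoly (n + 1) k)).IsHomogeneous n :=
          IsHomogeneous.sum _ _ _ fun j _ => hsum j
        have h2 := (isHomogeneous_X ℤ 0).mul (hS'.add hsum')
        rwa [Nat.add_comm 1 n] at h2

lemma s1_gt : ∀ n k : ℕ, n < k → s1 n k = 0
  | 0, _ + 1, _ => rfl
  | n + 1, k + 1, h => by
      rw [s1, s1_gt n k (by omega), s1_gt n (k+1) (by omega)]; ring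

lemma cyc_gt : ∀ n k : ℕ, n < k → cyc n k = 0
  | 0, _ + 1, _ => rfl
  | n + 1, k + 1, h => by
      simp [cyc, cyc_gt n k (by omega), cyc_gt n (k+1) (by omega)]

lemma s1_eq_cyc : ∀ n k : ℕ, s1 n k = (-1) ^ (n - k) * (cyc n k : ℤ)
  | 0, 0 => by simp [s1, cyc]
  | 0, k + 1 => by simp [s1, cyc]
  | n + 1, 0 => by simp [s1, cyc]
  | n + 1, k + 1 => by
      rw [s1, cyc, s1_eq_cyc n k, s1_eq_cyc n (k+1)]
      rcases le_or_gt n k with h | h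
      · rw [cyc_gt n (k+1) (by omega)]
        simp [show n - k = 0 by omega, show n + 1 - (k+1) = 0 by omega]
      · have h1 : n - k = (n - (k+1)) + 1 := by omega
        have h2 : n + 1 - (k + 1) = n - k := by omega
        rw [h2, h1, pow_succ]
        push_cast; ring

lemma eval_spoly : ∀ n k : ℕ, eval (fun _ => (1:ℤ)) (Spoly (n+1) k) = s1 (n+1) k
  | 0, k => by
      rcases eq_or_ne k 1 with rfl | h
      · simp [Spoly, s1]
      · rcases Nat.eq_zero_or_pos k with rfl | hk
        · simp [Spoly, s1]
        · rw [s1_gt 1 k (by omega)]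
          simp [Spoly, h]
  | (n+1), k => by
      rcases Nat.eq_zero_or_pos k with rfl | hk
      · rw [show s1 (n+1+1) 0 = 0 from rfl]
        simp [Spoly]
      obtain ⟨m, rfl⟩ : ∃ m, k = m + 1 := ⟨k-1, by omega⟩
      set S := Spoly (n+1) (m+1) with hSdef
      set M := (n+1) - (m+1) + 1 with hM
      have hvars : S.vars ⊆ Finset.range M := by
        intro i hi
        have h2 := (mem_supported.mp (spoly_supported (n+1) (m+1))) hi
        simp only [Set.mem_setOf_eq] at h2
        simp only [Finset.mem_range]
        omega
      have heuler := euler (spoly_homog n (m+1)) hvars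
      rw [nsmul_eq_mul] at heuler
      have heval := congrArg (eval (fun _ => (1:ℤ))) heuler
      simp only [map_sum, eval_mul, eval_X, map_natCast, one_mul] at heval
      -- heval : ∑ i ∈ range M, eval 1 (pderiv i S) = n * eval 1 S
      have hIcc : Finset.Icc 1 M = (Finset.range M).map
          ⟨fun i => i + 1, add_left_injective 1⟩ := by
        ext a
        simp only [Finset.mem_Icc, Finset.mem_map, Finset.mem_range,
          Function.Embedding.coeFn_mk]
        constructor
        · rintro ⟨h1, h2⟩; exact ⟨a - 1, by omega, by omega⟩
        · rintro ⟨i, hi, rfl⟩; exact ⟨show 1 ≤ i + 1 by omega, show i + 1 ≤ M by omega⟩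
      rw [show n+1+1 = n+2 from rfl, Spoly, if_neg (Nat.succ_ne_zero m)]
      simp only [eval_add, eval_mul, eval_C, eval_X, map_sum, one_mul, mul_one, map_natCast,
        Nat.add_sub_cancel]
      rw [hIcc, Finset.sum_map]
      simp only [Function.Embedding.coeFn_mk, eval_mul, eval_X, one_mul, Nat.add_sub_cancel]
      rw [heval, eval_spoly n (m+1), eval_spoly n m]
      rw [show s1 (n+2) (m+1) = s1 (n+1) m - (n+1) * s1 (n+1) (m+1) from rfl]
      ring

theorem spoly_eval_one (n k : ℕ) (hk : 1 ≤ k) (hkn : k ≤ n) :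
    eval (fun _ => (1 : ℤ)) (Spoly n k) = s1 n k ∧
      s1 n k = (-1) ^ (n - k) * (cyc n k : ℤ) := by
  obtain ⟨m, rfl⟩ : ∃ m, n = m + 1 := ⟨n - 1, by omega⟩
  exact ⟨eval_spoly m k, s1_eq_cyc (m+1) k⟩
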